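/- Let I be a left rooted quiver, A a Grothendieck category, and (Q, W, R) a Hovey triple in A with Q̃ = Q ∩ W. Assume Q̃ is closed under small coproducts. Then Φ(Q̃) = Φ(Q) ∩ Rep(I, W), where Φ(X) denotes the class of representations M such that φ_i^M is a monomorphism with cokernel in X for every vertex i. -/

import Mathlib

open CategoryTheory CategoryTheory.Limits

universe v u

namespace Paper

variable {C : Type u} [Category.{v} C] [Abelian C]

/-- `Ext¹(A, B) = 0`, expressed by the property that every short exact sequence
`0 → B → E → A → 0` splits. -/
def Ext1Zero (A B : C) : Prop :=
  ∀ ⦃E : C⦄ (i : B ⟶ E) (p : E ⟶ A) (w : i ≫ p = 0),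
    Mono i → Epi p → (ShortComplex.mk i p w).Exact → ∃ r : E ⟶ B, i ≫ r = 𝟙 B

/-- `0 → X → Y → Z → 0` is a short exact sequence. -/
def IsSES {X Y Z : C} (i : X ⟶ Y) (p : Y ⟶ Z) : Prop :=
  Mono i ∧ Epi p ∧ ∃ w : i ≫ p = 0, (ShortComplex.mk i p w).Exact

/-- `(Q, F)` is a cotorsion pair: `Q^⊥ = F` and `^⊥F = Q` with respect to `Ext¹`. -/
structure CotorsionPair (Q F : C → Prop) : Prop where
  right_eq : ∀ B, F B ↔ ∀ A, Q A → Ext1Zero A B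
  left_eq : ∀ A, Q A ↔ ∀ B, F B → Ext1Zero A B

/-- Completeness of a cotorsion pair: every object admits approximations on both sides. -/
def CompletePair (Q F : C → Prop) : Prop :=
  ∀ M : C,
    (∃ (D E : C) (i : D ⟶ E) (p : E ⟶ M), IsSES i p ∧ F D ∧ Q E) ∧
    (∃ (D' E' : C) (i : M ⟶ D') (p : D' ⟶ E'), IsSES i p ∧ F D' ∧ Q E')

/-- `Q` is closed under kernels of epimorphisms between objects of `Q`. -/
def Resolving (Q : C → Prop) : Prop :=
  ∀ ⦃X Y Z : C⦄ (i : X ⟶ Y) (p : Y ⟶ Z), IsSES i p → Q Y → Q Z → Q X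

/-- `F` is closed under cokernels of monomorphisms between objects of `F`. -/
def Coresolving (F : C → Prop) : Prop :=
  ∀ ⦃X Y Z : C⦄ (i : X ⟶ Y) (p : Y ⟶ Z), IsSES i p → F X → F Y → F Z

/-- A thick subcategory: closed under direct summands, extensions, kernels of
epimorphisms and cokernels of monomorphisms. -/
structure Thick (W : C → Prop) : Prop where
  retract : ∀ ⦃X Y : C⦄ (s : X ⟶ Y) (r : Y ⟶ X), s ≫ r = 𝟙 X → W Y → W X
  extensions : ∀ ⦃X Y Z : C⦄ (i : X ⟶ Y) (p : Y ⟶ Z), IsSES i p → W X → W Z → W Y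
  ker_of_epi : ∀ ⦃X Y Z : C⦄ (i : X ⟶ Y) (p : Y ⟶ Z), IsSES i p → W Y → W Z → W X
  coker_of_mono : ∀ ⦃X Y Z : C⦄ (i : X ⟶ Y) (p : Y ⟶ Z), IsSES i p → W X → W Y → W Z

/-- A Hovey triple `(Q, W, R)`: `W` is thick and both `(Q, W ∩ R)` and `(Q ∩ W, R)`
are complete cotorsion pairs. -/
structure HoveyTriple (Q W R : C → Prop) : Prop where
  thick : Thick W
  cp₁ : CotorsionPair Q (fun X => W X ∧ R X)
  complete₁ : CompletePair Q (fun X => W X ∧ R X)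
  cp₂ : CotorsionPair (fun X => Q X ∧ W X) R
  complete₂ : CompletePair (fun X => Q X ∧ W X) R

/-- `(Q, W, R)` is a hereditary Hovey triple. -/
def HereditaryHoveyTriple (Q W R : C → Prop) : Prop :=
  HoveyTriple Q W R ∧
    (Resolving Q ∧ Coresolving (fun X => W X ∧ R X)) ∧
    (Resolving (fun X => Q X ∧ W X) ∧ Coresolving R)

end Paper

namespace Paper

open CategoryTheory CategoryTheory.Limits

noncomputable def rootFiltration (V : Type v) [Quiver V] (χ : Ordinal.{v}) : Set V :=
  Ordinal.limitRecOn χ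
    (∅ : Set V)
    (fun _ W => W ∪ { i : V | ∀ ⦃j : V⦄, (j ⟶ i) → j ∈ W })
    (fun χ' _ ih => ⋃ (μ : Ordinal.{v}) (h : μ < χ'), ih μ h)

/-- A quiver is left rooted if the transfinite sequence `V_χ` exhausts all the vertices. -/
def IsLeftRooted (V : Type v) [Quiver V] : Prop :=
  ∃ lam : Ordinal.{v}, rootFiltration V lam = Set.univ

variable {V : Type v} [Quiver.{v} V] {A : Type u} [Category.{v} A] [Abelian A]
  [HasColimits A]

/-- The canonical map `φᵢᴹ : ⨁_{a ∈ I(•,i)} M_{s(a)} ⟶ M_i` for a representation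
`M : Paths V ⥤ A` of the quiver `V` in `A`. -/
noncomputable def phiRep (M : Paths V ⥤ A) (i : V) :
    (∐ fun p : Σ j : V, j ⟶ i => M.obj ((Paths.of V).obj p.1)) ⟶ M.obj ((Paths.of V).obj i) :=
  Sigma.desc fun p => M.map p.2.toPath

/-- `Φ(Q)`: representations `M` such that each `φᵢᴹ` is a monomorphism with cokernel
in `Q`. -/
def PhiClass (Q : A → Prop) (M : Paths V ⥤ A) : Prop :=
  ∀ i : V, Mono (phiRep M i) ∧ Q (cokernel (phiRep M i))

/-- The class of representations belonging to `W` at every vertex. -/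
def VertexwiseClass (W : A → Prop) (M : Paths V ⥤ A) : Prop :=
  ∀ i : V, W (M.obj ((Paths.of V).obj i))

end Paper

namespace Paper

open CategoryTheory CategoryTheory.Limits CategoryTheory.Abelian
open scoped Pseudoelement

variable {C : Type u} [Category.{v} C] [Abelian C]

lemma isSES_of_mono {X Y : C} (f : X ⟶ Y) [Mono f] : IsSES f (cokernel.π f) :=
  ⟨inferInstance, inferInstance, cokernel.condition f,
    ShortComplex.exact_of_g_is_cokernel _ (cokernelIsCokernel f)⟩

lemma ext1Zero_of_extension {X Y Z B : C} (i : X ⟶ Y) (q : Y ⟶ Z)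
    (hses : IsSES i q) (hX : Ext1Zero X B) (hZ : Ext1Zero Z B) :
    Ext1Zero Y B := by
  obtain ⟨hi, hq, wi, hexact⟩ := hses
  haveI := hi; haveI := hq
  intro E iB p w hmono hepi hE
  haveI := hmono; haveI := hepi
  -- Step 1: the pullback of `p` along `i`.
  let j : B ⟶ pullback p i := pullback.lift iB 0 (by rw [w, zero_comp])
  have hjf : j ≫ pullback.fst p i = iB := pullback.lift_fst _ _ _
  have hjs : j ≫ pullback.snd p i = 0 := pullback.lift_snd _ _ _
  haveI : Mono j := mono_of_mono_fac hjf
  haveI : Epi (pullback.snd p i) := inferInstance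
  -- exactness of `B ⟶ P ⟶ X`
  have hPexact : (ShortComplex.mk j (pullback.snd p i) hjs).Exact := by
    apply Pseudoelement.exact_of_pseudo_exact
    intro b hb
    have h1 : p (pullback.fst p i b) = 0 := by
      rw [← Pseudoelement.comp_apply, pullback.condition, Pseudoelement.comp_apply,
        hb, Pseudoelement.apply_zero]
    obtain ⟨a, ha⟩ := Pseudoelement.pseudo_exact_of_exact hE _ h1
    refine ⟨a, Pseudoelement.pseudo_injective_of_mono (pullback.fst p i) ?_⟩
    rw [← Pseudoelement.comp_apply, hjf, ha]
  -- split the pullback sequence using `Ext¹(X, B) = 0`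
  obtain ⟨r1, hr1⟩ := hX j (pullback.snd p i) hjs ‹Mono j› ‹Epi _› hPexact
  haveI : Epi (ShortComplex.mk j (pullback.snd p i) hjs).g := ‹Epi (pullback.snd p i)›
  have hcoker := hPexact.gIsCokernel
  have hju : j ≫ (𝟙 (pullback p i) - r1 ≫ j) = 0 := by
    rw [Preadditive.comp_sub, Category.comp_id, ← Category.assoc, hr1, Category.id_comp, sub_self]
  obtain ⟨t, ht⟩ := CokernelCofork.IsColimit.desc' hcoker _ hju
  have hts : t ≫ pullback.snd p i = 𝟙 X := by
    have h2 : pullback.snd p i ≫ t ≫ pullback.snd p i = pullback.snd p i ≫ 𝟙 X := by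
      rw [← Category.assoc]
      rw [show (pullback.snd p i : pullback p i ⟶ X) ≫ t = 𝟙 (pullback p i) - r1 ≫ j from ht]
      rw [Preadditive.sub_comp, Category.id_comp, Category.assoc, hjs, comp_zero, sub_zero,
        Category.comp_id]
    exact (cancel_epi (pullback.snd p i)).1 h2
  -- the section `σ : X ⟶ E` of `p` over `i`
  let σ : X ⟶ E := t ≫ pullback.fst p i
  have hσp : σ ≫ p = i := by
    rw [Category.assoc, pullback.condition, ← Category.assoc, hts, Category.id_comp]
  haveI : Mono σ := by
    haveI : Mono (σ ≫ p) := by rw [hσp]; infer_instance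
    exact mono_of_mono σ p
  -- the quotient sequence `B ⟶ E/σ(X) ⟶ Z`
  let c : E ⟶ cokernel σ := cokernel.π σ
  let pbar : cokernel σ ⟶ Z := cokernel.desc σ (p ≫ q) (by rw [← Category.assoc, hσp, wi])
  have hcp : c ≫ pbar = p ≫ q := cokernel.π_desc _ _ _
  haveI : Epi (p ≫ q) := epi_comp _ _
  haveI : Epi pbar := epi_of_epi_fac hcp
  have hσexact : (ShortComplex.mk σ c (cokernel.condition σ)).Exact :=
    ShortComplex.exact_of_g_is_cokernel _ (cokernelIsCokernel σ)
  have wB : (iB ≫ c) ≫ pbar = 0 := by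
    rw [Category.assoc, hcp, ← Category.assoc, w, zero_comp]
  have hcσ : ∀ x : X, c (σ x) = 0 := fun x => by
    rw [← Pseudoelement.comp_apply, cokernel.condition, Pseudoelement.zero_apply]
  haveI : Mono (iB ≫ c) := by
    apply Pseudoelement.mono_of_zero_of_map_zero
    intro a ha
    rw [Pseudoelement.comp_apply] at ha
    obtain ⟨x, hx⟩ := Pseudoelement.pseudo_exact_of_exact hσexact _ ha
    have h3 : i x = 0 := by
      rw [← hσp, Pseudoelement.comp_apply, hx, ← Pseudoelement.comp_apply, w,
        Pseudoelement.zero_apply]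
    have hx0 : x = 0 :=
      Pseudoelement.zero_of_map_zero i (Pseudoelement.pseudo_injective_of_mono i) _ h3
    have h4 : iB a = 0 := by rw [← hx, hx0, Pseudoelement.apply_zero]
    exact Pseudoelement.zero_of_map_zero iB (Pseudoelement.pseudo_injective_of_mono iB) _ h4
  have hZexact : (ShortComplex.mk (iB ≫ c) pbar wB).Exact := by
    apply Pseudoelement.exact_of_pseudo_exact
    intro e' he'
    obtain ⟨e, he⟩ := Pseudoelement.pseudo_surjective_of_epi c e'
    have h1 : q (p e) = 0 := by
      rw [← Pseudoelement.comp_apply, ← hcp, Pseudoelement.comp_apply, he, he']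
    obtain ⟨x, hx⟩ := Pseudoelement.pseudo_exact_of_exact hexact _ h1
    have h2 : p e = p (σ x) := by
      rw [← Pseudoelement.comp_apply, hσp, hx]
    obtain ⟨z, hz0, hz⟩ := Pseudoelement.sub_of_eq_image p e (σ x) h2
    obtain ⟨b, hb⟩ := Pseudoelement.pseudo_exact_of_exact hE _ hz0
    refine ⟨b, ?_⟩
    rw [Pseudoelement.comp_apply, hb, hz _ c (hcσ x), he]
  obtain ⟨r2, hr2⟩ := hZ (iB ≫ c) pbar wB ‹Mono _› ‹Epi _› hZexact
  exact ⟨c ≫ r2, by rw [← Category.assoc, hr2]⟩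

lemma left_class_extension {Q F : C → Prop} (hcp : CotorsionPair Q F)
    {X Y Z : C} (i : X ⟶ Y) (q : Y ⟶ Z) (hses : IsSES i q) (hX : Q X) (hZ : Q Z) : Q Y := by
  rw [hcp.left_eq]
  intro B hB
  exact ext1Zero_of_extension i q hses ((hcp.left_eq X).1 hX B hB) ((hcp.left_eq Z).1 hZ B hB)

lemma rootFiltration_zero (V : Type v) [Quiver V] : rootFiltration V 0 = ∅ :=
  Ordinal.limitRecOn_zero _ _ _

lemma rootFiltration_succ (V : Type v) [Quiver V] (χ : Ordinal.{v}) :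
    rootFiltration V (Order.succ χ) =
      rootFiltration V χ ∪ { i : V | ∀ ⦃j : V⦄, (j ⟶ i) → j ∈ rootFiltration V χ } :=
  Ordinal.limitRecOn_succ _ _ _ _

lemma rootFiltration_limit (V : Type v) [Quiver V] (χ : Ordinal.{v}) (h : Order.IsSuccLimit χ) :
    rootFiltration V χ = ⋃ (μ : Ordinal.{v}) (_ : μ < χ), rootFiltration V μ :=
  Ordinal.limitRecOn_limit _ _ _ _ h

lemma leftRooted_induction {V : Type v} [Quiver.{v} V] (hV : IsLeftRooted V)
    {P : V → Prop} (key : ∀ i : V, (∀ ⦃j : V⦄, (j ⟶ i) → P j) → P i) : ∀ i, P i := by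
  obtain ⟨lam, hlam⟩ := hV
  suffices h : ∀ χ : Ordinal.{v}, ∀ i ∈ rootFiltration V χ, P i by
    intro i
    exact h lam i (hlam ▸ Set.mem_univ i)
  intro χ
  induction χ using Ordinal.limitRecOn with
  | zero => simp [rootFiltration_zero]
  | add_one μ ih =>
    intro i hi
    rw [Ordinal.add_one_eq_succ, rootFiltration_succ] at hi
    rcases hi with hi | hi
    · exact ih i hi
    · exact key i fun j a => ih j (hi a)
  | limit χ hχ ih =>
    intro i hi
    rw [rootFiltration_limit _ _ hχ] at hi
    simp only [Set.mem_iUnion] at hi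
    obtain ⟨μ, hμ, hiμ⟩ := hi
    exact ih μ hμ i hiμ

end Paper

open Paper CategoryTheory CategoryTheory.Limits in
theorem stmt10 {V : Type v} [Quiver.{v} V] (hV : IsLeftRooted V)
    {A : Type u} [Category.{v} A] [Abelian A] [HasLimits A] [HasColimits A]
    [AB5 A] [HasSeparator A]
    (Q W R : A → Prop) (h : HoveyTriple Q W R)
    (hcoprod : ∀ (ι : Type v) (g : ι → A), (∀ x, Q (g x) ∧ W (g x)) → Q (∐ g) ∧ W (∐ g)) :
    ∀ M : Paths V ⥤ A,
      PhiClass (fun X => Q X ∧ W X) M ↔ (PhiClass Q M ∧ VertexwiseClass W M) := by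
  intro M
  constructor
  · intro hM
    have key : ∀ i : V, Q (M.obj ((Paths.of V).obj i)) ∧ W (M.obj ((Paths.of V).obj i)) := by
      refine leftRooted_induction hV ?_
      intro i ih
      obtain ⟨hmono, hQ, hW⟩ := hM i
      haveI := hmono
      have hses := isSES_of_mono (phiRep M i)
      have hcop := hcoprod _ (fun p : Σ j : V, j ⟶ i => M.obj ((Paths.of V).obj p.1))
        (fun p => ih p.2)
      exact ⟨left_class_extension h.cp₁ _ _ hses hcop.1 hQ,
        h.thick.extensions _ _ hses hcop.2 hW⟩
    exact ⟨fun i => ⟨(hM i).1, (hM i).2.1⟩, fun i => (key i).2⟩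
  · rintro ⟨hQM, hWM⟩
    have key : ∀ i : V, Q (M.obj ((Paths.of V).obj i)) := by
      refine leftRooted_induction hV ?_
      intro i ih
      obtain ⟨hmono, hQ⟩ := hQM i
      haveI := hmono
      have hcop := hcoprod _ (fun p : Σ j : V, j ⟶ i => M.obj ((Paths.of V).obj p.1))
        (fun p => ⟨ih p.2, hWM _⟩)
      exact left_class_extension h.cp₁ _ _ (isSES_of_mono (phiRep M i)) hcop.1 hQ
    intro i
    obtain ⟨hmono, hQ⟩ := hQM i
    haveI := hmono
    refine ⟨hmono, hQ, ?_⟩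
    have hcop := hcoprod _ (fun p : Σ j : V, j ⟶ i => M.obj ((Paths.of V).obj p.1))
      (fun p => ⟨key _, hWM _⟩)
    exact h.thick.coker_of_mono _ _ (isSES_of_mono (phiRep M i)) hcop.2 (hWM i)
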